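/- Let θ(t) = (u(t), V(t)) ∈ ℝʳ × ℝ^{m×r} satisfy a gradient flow of any C¹ function of the form E(u, V) = F((uᵢ‖vᵢ‖, vᵢ/‖vᵢ‖)_{i=1}^r) on the open set where all vᵢ ≠ 0. Then for each i, t ↦ uᵢ(t)² − ‖vᵢ(t)‖² is constant along the flow. -/

import Mathlib

open InnerProductSpace

/-- Identification of a plain function with an element of Euclidean space. -/
def toE16 {ι : Type*} [Fintype ι] (f : ι → ℝ) : EuclideanSpace ℝ ι := WithLp.toLp 2 f

/-- `‖vᵢ‖`, the norm of the `i`-th column of `V`, for a parameter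
`θ = (u, V) ∈ ℝʳ × ℝ^{m×r}` encoded in `ℝ^{r + mr}`. -/
noncomputable def vnorm16 (m r : ℕ) (θ : EuclideanSpace ℝ (Fin r ⊕ Fin m × Fin r))
    (i : Fin r) : ℝ :=
  Real.sqrt (∑ a : Fin m, θ (Sum.inr (a, i)) ^ 2)

/-- The reparametrization `φ(u,V) = (uᵢ‖vᵢ‖, vᵢ/‖vᵢ‖)_{i=1}^r`. -/
noncomputable def phi16 (m r : ℕ) (θ : EuclideanSpace ℝ (Fin r ⊕ Fin m × Fin r)) :
    EuclideanSpace ℝ (Fin r ⊕ Fin m × Fin r) :=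
  toE16 fun x =>
    match x with
    | Sum.inl i => θ (Sum.inl i) * vnorm16 m r θ i
    | Sum.inr (a, i) => θ (Sum.inr (a, i)) / vnorm16 m r θ i

/- ### Auxiliary definitions -/

noncomputable def q16 (m r : ℕ) (j : Fin r) (w : EuclideanSpace ℝ (Fin r ⊕ Fin m × Fin r)) : ℝ :=
  ∑ a : Fin m, w (Sum.inr (a, j)) ^ 2

noncomputable def qd16 (m r : ℕ) (j : Fin r) (w : EuclideanSpace ℝ (Fin r ⊕ Fin m × Fin r)) :
    EuclideanSpace ℝ (Fin r ⊕ Fin m × Fin r) →L[ℝ] ℝ :=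
  ∑ a : Fin m, (2 * w (Sum.inr (a, j))) • EuclideanSpace.proj (Sum.inr (a, j))

noncomputable def gvec16 (m r : ℕ) (i : Fin r) (w : EuclideanSpace ℝ (Fin r ⊕ Fin m × Fin r)) :
    EuclideanSpace ℝ (Fin r ⊕ Fin m × Fin r) :=
  toE16 fun x =>
    match x with
    | Sum.inl j => if j = i then 2 * w (Sum.inl i) else 0
    | Sum.inr (a, j) => if j = i then -(2 * w (Sum.inr (a, i))) else 0

lemma gvec16_inl (m r : ℕ) (i j : Fin r) (w : EuclideanSpace ℝ (Fin r ⊕ Fin m × Fin r)) :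
    gvec16 m r i w (Sum.inl j) = if j = i then 2 * w (Sum.inl i) else 0 := rfl

lemma gvec16_inr (m r : ℕ) (i j : Fin r) (a : Fin m)
    (w : EuclideanSpace ℝ (Fin r ⊕ Fin m × Fin r)) :
    gvec16 m r i w (Sum.inr (a, j)) = if j = i then -(2 * w (Sum.inr (a, i))) else 0 := rfl

lemma hasFDerivAt_q16 (m r : ℕ) (j : Fin r) (w : EuclideanSpace ℝ (Fin r ⊕ Fin m × Fin r)) :
    HasFDerivAt (q16 m r j) (qd16 m r j w) w := by
  have h : ∀ a : Fin m, HasFDerivAt (fun w : EuclideanSpace ℝ (Fin r ⊕ Fin m × Fin r) =>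
      (w (Sum.inr (a, j)) : ℝ) ^ 2) ((((2:ℝ) * w (Sum.inr (a, j))) • EuclideanSpace.proj (Sum.inr (a, j)) : EuclideanSpace ℝ (Fin r ⊕ Fin m × Fin r) →L[ℝ] ℝ)) w := by
    intro a
    have hp := (EuclideanSpace.proj (𝕜 := ℝ) (Sum.inr (a, j))).hasFDerivAt (x := w)
    have h2 := hp.mul hp
    have hfun : (fun w : EuclideanSpace ℝ (Fin r ⊕ Fin m × Fin r) => (w (Sum.inr (a, j)) : ℝ) ^ 2)
        = fun y => EuclideanSpace.proj (𝕜 := ℝ) (Sum.inr (a, j)) y *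
            EuclideanSpace.proj (𝕜 := ℝ) (Sum.inr (a, j)) y := by
      funext y; simp [pow_two]
    rw [hfun]
    refine h2.congr_fderiv ?_
    ext y
    simp [two_mul, add_smul, ContinuousLinearMap.add_apply, ContinuousLinearMap.smul_apply,
      smul_eq_mul]
  exact HasFDerivAt.fun_sum fun a _ => h a

lemma qd16_apply (m r : ℕ) (j : Fin r) (w x : EuclideanSpace ℝ (Fin r ⊕ Fin m × Fin r)) :
    qd16 m r j w x = ∑ a : Fin m, 2 * w (Sum.inr (a, j)) * x (Sum.inr (a, j)) := by
  simp [qd16, ContinuousLinearMap.sum_apply]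

lemma qd16_gvec (m r : ℕ) (i j : Fin r) (w : EuclideanSpace ℝ (Fin r ⊕ Fin m × Fin r)) :
    qd16 m r j w (gvec16 m r i w) = if j = i then -4 * q16 m r i w else 0 := by
  rw [qd16_apply]
  by_cases hji : j = i
  · subst hji
    simp only [gvec16_inr, if_true, eq_self_iff_true, q16, Finset.mul_sum]
    refine Finset.sum_congr rfl fun a _ => by simp; ring
  · simp [gvec16_inr, hji]

theorem stmt16_placeholder : True := trivial

lemma phi16_inl (m r : ℕ) (j : Fin r) (w : EuclideanSpace ℝ (Fin r ⊕ Fin m × Fin r)) :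
    phi16 m r w (Sum.inl j) = w (Sum.inl j) * vnorm16 m r w j := rfl

lemma phi16_inr (m r : ℕ) (j : Fin r) (b : Fin m) (w : EuclideanSpace ℝ (Fin r ⊕ Fin m × Fin r)) :
    phi16 m r w (Sum.inr (b, j)) = w (Sum.inr (b, j)) / vnorm16 m r w j := rfl

lemma vnorm16_eq (m r : ℕ) (j : Fin r) (w : EuclideanSpace ℝ (Fin r ⊕ Fin m × Fin r)) :
    vnorm16 m r w j = Real.sqrt (q16 m r j w) := rfl

lemma hasFDerivAt_sqrtq16 {m r : ℕ} {j : Fin r} {w : EuclideanSpace ℝ (Fin r ⊕ Fin m × Fin r)}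
    (hq : 0 < q16 m r j w) :
    HasFDerivAt (fun w => Real.sqrt (q16 m r j w))
      ((1 / (2 * Real.sqrt (q16 m r j w))) • qd16 m r j w) w :=
  (Real.hasDerivAt_sqrt hq.ne').comp_hasFDerivAt w (hasFDerivAt_q16 m r j w)

lemma exists_fderiv_phi16_inl (m r : ℕ) (i j : Fin r)
    (w : EuclideanSpace ℝ (Fin r ⊕ Fin m × Fin r)) (hq : 0 < q16 m r j w) :
    ∃ D : EuclideanSpace ℝ (Fin r ⊕ Fin m × Fin r) →L[ℝ] ℝ,
      HasFDerivAt (fun w => phi16 m r w (Sum.inl j)) D w ∧ D (gvec16 m r i w) = 0 := by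
  have hs : Real.sqrt (q16 m r j w) ≠ 0 := (Real.sqrt_pos.mpr hq).ne'
  have hp := (EuclideanSpace.proj (𝕜 := ℝ) (Sum.inl j)).hasFDerivAt (x := w)
  have hD := hp.mul (hasFDerivAt_sqrtq16 hq)
  refine ⟨_, hD, ?_⟩
  have hqg := qd16_gvec m r i j w
  by_cases hji : j = i
  · subst hji
    rw [if_pos rfl] at hqg
    have hsq : Real.sqrt (q16 m r j w) * Real.sqrt (q16 m r j w) = q16 m r j w :=
      Real.mul_self_sqrt (le_of_lt hq)
    simp only [ContinuousLinearMap.add_apply, ContinuousLinearMap.smul_apply, smul_eq_mul,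
      hqg, gvec16_inl, if_pos rfl, PiLp.proj_apply, eq_self_iff_true, if_true]
    set s := Real.sqrt (q16 m r j w) with hsdef
    rw [← hsq]
    field_simp
    ring
  · rw [if_neg hji] at hqg
    simp [ContinuousLinearMap.add_apply, ContinuousLinearMap.smul_apply, hqg,
      gvec16_inl, hji, PiLp.proj_apply, eq_self_iff_true, if_true]

lemma exists_fderiv_phi16_inr (m r : ℕ) (i j : Fin r) (b : Fin m)
    (w : EuclideanSpace ℝ (Fin r ⊕ Fin m × Fin r)) (hq : 0 < q16 m r j w) :
    ∃ D : EuclideanSpace ℝ (Fin r ⊕ Fin m × Fin r) →L[ℝ] ℝ,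
      HasFDerivAt (fun w => phi16 m r w (Sum.inr (b, j))) D w ∧ D (gvec16 m r i w) = 0 := by
  have hs : Real.sqrt (q16 m r j w) ≠ 0 := (Real.sqrt_pos.mpr hq).ne'
  have hinv := (hasDerivAt_inv hs).comp (q16 m r j w) (Real.hasDerivAt_sqrt hq.ne')
  have hsf := hinv.comp_hasFDerivAt w (hasFDerivAt_q16 m r j w)
  have hp := (EuclideanSpace.proj (𝕜 := ℝ) (Sum.inr (b, j))).hasFDerivAt (x := w)
  have hD := hp.mul hsf
  have hfun : (fun w : EuclideanSpace ℝ (Fin r ⊕ Fin m × Fin r) => phi16 m r w (Sum.inr (b, j)))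
      = fun y : EuclideanSpace ℝ (Fin r ⊕ Fin m × Fin r) =>
        EuclideanSpace.proj (𝕜 := ℝ) (Sum.inr (b, j)) y *
          ((fun y => (Real.sqrt y)⁻¹) ∘ q16 m r j) y := by
    funext y
    simp [phi16_inr, vnorm16_eq, div_eq_mul_inv, Function.comp]
  rw [hfun]
  refine ⟨_, hD, ?_⟩
  have hqg := qd16_gvec m r i j w
  by_cases hji : j = i
  · subst hji
    rw [if_pos rfl] at hqg
    have hsq : Real.sqrt (q16 m r j w) * Real.sqrt (q16 m r j w) = q16 m r j w :=
      Real.mul_self_sqrt (le_of_lt hq)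
    simp only [ContinuousLinearMap.add_apply, ContinuousLinearMap.smul_apply, smul_eq_mul,
      hqg, gvec16_inr, if_pos rfl, PiLp.proj_apply, eq_self_iff_true, if_true, Function.comp]
    set s := Real.sqrt (q16 m r j w) with hsdef
    rw [← hsq]
    field_simp
    ring
  · rw [if_neg hji] at hqg
    simp [ContinuousLinearMap.add_apply, ContinuousLinearMap.smul_apply, hqg,
      gvec16_inr, hji, PiLp.proj_apply, eq_self_iff_true, if_true]

lemma exists_fderiv_phi16_comp (m r : ℕ) (i : Fin r)
    (w : EuclideanSpace ℝ (Fin r ⊕ Fin m × Fin r)) (hq : ∀ j, 0 < q16 m r j w)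
    (x : Fin r ⊕ Fin m × Fin r) :
    ∃ D : EuclideanSpace ℝ (Fin r ⊕ Fin m × Fin r) →L[ℝ] ℝ,
      HasFDerivAt (fun w => phi16 m r w x) D w ∧ D (gvec16 m r i w) = 0 := by
  rcases x with j | ⟨b, j⟩
  · exact exists_fderiv_phi16_inl m r i j w (hq j)
  · exact exists_fderiv_phi16_inr m r i j b w (hq j)

lemma differentiableAt_phi16 {m r : ℕ} {w : EuclideanSpace ℝ (Fin r ⊕ Fin m × Fin r)}
    (hq : ∀ j, 0 < q16 m r j w) : DifferentiableAt ℝ (phi16 m r) w := by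
  have h0 : DifferentiableAt ℝ (fun w (x : Fin r ⊕ Fin m × Fin r) => phi16 m r w x) w := by
    refine differentiableAt_pi.2 fun x => ?_
    rcases x with j | ⟨b, j⟩
    · obtain ⟨D, hD, -⟩ := exists_fderiv_phi16_inl m r j j w (hq j)
      exact hD.differentiableAt
    · obtain ⟨D, hD, -⟩ := exists_fderiv_phi16_inr m r j j b w (hq j)
      exact hD.differentiableAt
  exact ((PiLp.continuousLinearEquiv 2 ℝ
    (fun _ : Fin r ⊕ Fin m × Fin r => ℝ)).symm.differentiableAt.comp w h0 : _)

lemma fderiv_phi16_gvec {m r : ℕ} (i : Fin r) {w : EuclideanSpace ℝ (Fin r ⊕ Fin m × Fin r)}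
    (hq : ∀ j, 0 < q16 m r j w) :
    fderiv ℝ (phi16 m r) w (gvec16 m r i w) = 0 := by
  have hφ := (differentiableAt_phi16 hq).hasFDerivAt
  refine PiLp.ext fun x => ?_
  obtain ⟨D, hD, hDg⟩ := exists_fderiv_phi16_comp m r i w hq x
  have hcomp : HasFDerivAt (fun w => phi16 m r w x)
      ((EuclideanSpace.proj (𝕜 := ℝ) x).comp (fderiv ℝ (phi16 m r) w)) w :=
    (EuclideanSpace.proj (𝕜 := ℝ) x).hasFDerivAt.comp w hφ
  have huniq := hcomp.unique hD
  have : (EuclideanSpace.proj (𝕜 := ℝ) x).comp (fderiv ℝ (phi16 m r) w) (gvec16 m r i w) = 0 := by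
    rw [huniq]; exact hDg
  simpa using this

lemma fderiv_E16_gvec {m r : ℕ} (F : EuclideanSpace ℝ (Fin r ⊕ Fin m × Fin r) → ℝ)
    (hF : ContDiff ℝ 1 F) (i : Fin r) {w : EuclideanSpace ℝ (Fin r ⊕ Fin m × Fin r)}
    (hq : ∀ j, 0 < q16 m r j w) :
    fderiv ℝ (fun w => F (phi16 m r w)) w (gvec16 m r i w) = 0 := by
  have hφ := differentiableAt_phi16 hq
  have hFd : DifferentiableAt ℝ F (phi16 m r w) :=
    (hF.differentiable one_ne_zero).differentiableAt
  rw [show (fun w => F (phi16 m r w)) = F ∘ phi16 m r from rfl, fderiv_comp w hFd hφ]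
  simp [fderiv_phi16_gvec i hq]

lemma gradient_inner16 {m r : ℕ} (f : EuclideanSpace ℝ (Fin r ⊕ Fin m × Fin r) → ℝ)
    (w y : EuclideanSpace ℝ (Fin r ⊕ Fin m × Fin r)) :
    (inner ℝ (gradient f w) y : ℝ) = fderiv ℝ f w y := by
  rw [gradient]
  exact InnerProductSpace.toDual_symm_apply

noncomputable def hd16 (m r : ℕ) (i : Fin r) (w : EuclideanSpace ℝ (Fin r ⊕ Fin m × Fin r)) :
    EuclideanSpace ℝ (Fin r ⊕ Fin m × Fin r) →L[ℝ] ℝ :=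
  ((2 : ℝ) * w (Sum.inl i)) • EuclideanSpace.proj (Sum.inl i) - qd16 m r i w

lemma hasFDerivAt_h16 (m r : ℕ) (i : Fin r) (w : EuclideanSpace ℝ (Fin r ⊕ Fin m × Fin r)) :
    HasFDerivAt (fun w : EuclideanSpace ℝ (Fin r ⊕ Fin m × Fin r) =>
      (w (Sum.inl i) : ℝ) ^ 2 - q16 m r i w) (hd16 m r i w) w := by
  refine HasFDerivAt.sub ?_ (hasFDerivAt_q16 m r i w)
  have hp := (EuclideanSpace.proj (𝕜 := ℝ) (Sum.inl i)).hasFDerivAt (x := w)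
  have h2 := hp.mul hp
  have hfun : (fun w : EuclideanSpace ℝ (Fin r ⊕ Fin m × Fin r) => (w (Sum.inl i) : ℝ) ^ 2)
      = fun y => EuclideanSpace.proj (𝕜 := ℝ) (Sum.inl i) y *
          EuclideanSpace.proj (𝕜 := ℝ) (Sum.inl i) y := by
    funext y; simp [pow_two]
  rw [hfun]
  refine h2.congr_fderiv ?_
  ext y
  simp [two_mul, add_smul, ContinuousLinearMap.add_apply, ContinuousLinearMap.smul_apply,
    smul_eq_mul]

lemma hd16_eq_inner (m r : ℕ) (i : Fin r) (w v : EuclideanSpace ℝ (Fin r ⊕ Fin m × Fin r)) :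
    hd16 m r i w v = (inner ℝ v (gvec16 m r i w) : ℝ) := by
  simp only [hd16, ContinuousLinearMap.sub_apply, ContinuousLinearMap.smul_apply,
    smul_eq_mul, qd16_apply, PiLp.proj_apply, PiLp.inner_apply, RCLike.inner_apply,
    starRingEnd_apply, star_trivial, Fintype.sum_sum_type, Fintype.sum_prod_type,
    gvec16_inl, gvec16_inr, mul_ite, mul_zero, mul_neg]
  simp only [ite_mul, zero_mul, Finset.sum_ite_eq', Finset.mem_univ, if_true]
  rw [sub_eq_add_neg, ← Finset.sum_neg_distrib]
  congr 1
  exact Finset.sum_congr rfl fun a _ => by ring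

/-- along any gradient flow of a C¹ cost of the form
`E(u,V) = F((uᵢ‖vᵢ‖, vᵢ/‖vᵢ‖)ᵢ)` (on the set where all `vᵢ ≠ 0`), each quantity
`uᵢ² - ‖vᵢ‖²` is constant in time. -/
theorem stmt16 (m r : ℕ) (F : EuclideanSpace ℝ (Fin r ⊕ Fin m × Fin r) → ℝ)
    (hF : ContDiff ℝ 1 F)
    (θ : ℝ → EuclideanSpace ℝ (Fin r ⊕ Fin m × Fin r))
    (hdom : ∀ t (i : Fin r), ∃ a, θ t (Sum.inr (a, i)) ≠ 0)
    (hflow : ∀ t, HasDerivAt θ (-gradient (fun w => F (phi16 m r w)) (θ t)) t) :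
    ∀ (i : Fin r) (t s : ℝ),
      θ t (Sum.inl i) ^ 2 - ∑ a : Fin m, θ t (Sum.inr (a, i)) ^ 2
        = θ s (Sum.inl i) ^ 2 - ∑ a : Fin m, θ s (Sum.inr (a, i)) ^ 2 := by
  intro i t s
  have hq : ∀ t j, 0 < q16 m r j (θ t) := by
    intro t j
    obtain ⟨a, ha⟩ := hdom t j
    exact Finset.sum_pos' (fun _ _ => sq_nonneg _) ⟨a, Finset.mem_univ a, by positivity⟩
  have key : ∀ t, HasDerivAt
      (fun t => (θ t (Sum.inl i) : ℝ) ^ 2 - q16 m r i (θ t)) 0 t := by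
    intro t
    have hh := hasFDerivAt_h16 m r i (θ t)
    have hcomp := hh.comp_hasDerivAt t (hflow t)
    have e : hd16 m r i (θ t) (-gradient (fun w => F (phi16 m r w)) (θ t)) = 0 := by
      rw [map_neg, hd16_eq_inner, gradient_inner16 (fun w => F (phi16 m r w)) (θ t) (gvec16 m r i (θ t)),
        fderiv_E16_gvec F hF i (hq t), neg_zero]
    rw [e] at hcomp
    exact hcomp
  have hdiff : Differentiable ℝ (fun t => (θ t (Sum.inl i) : ℝ) ^ 2 - q16 m r i (θ t)) :=
    fun t => (key t).differentiableAt
  have hconst := is_const_of_deriv_eq_zero hdiff (fun t => (key t).deriv) t s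
  simpa [q16] using hconst
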